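/- Let f : ℝ^p → ℝ be β-smooth, attain infimum f*, and satisfy the Polyak–Łojasiewicz inequality (1/2)‖∇f(x)‖² ≥ μ(f(x) - f*) for all x, with μ > 0. Then gradient descent iterates x_{t+1} = x_t - η∇f(x_t) with 0 < η ≤ 1/β satisfy f(x_t) - f* ≤ (1 - ημ)^t (f(x_0) - f*). -/

import Mathlib

open InnerProductSpace

local notation "⟪" a ", " b "⟫" => @inner ℝ _ _ a b

/-- Descent lemma. -/
lemma descent_lemma {p : ℕ} {f : EuclideanSpace ℝ (Fin p) → ℝ}
    {g : EuclideanSpace ℝ (Fin p) → EuclideanSpace ℝ (Fin p)} {β : ℝ}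
    (hgrad : ∀ x, HasGradientAt f (g x) x)
    (hlip : LipschitzWith (Real.toNNReal β) g) (hβ : 0 ≤ β)
    (x v : EuclideanSpace ℝ (Fin p)) :
    f (x + v) ≤ f x + ⟪g x, v⟫ + β / 2 * ‖v‖ ^ 2 := by
  set ψ : ℝ → ℝ := fun s => f (x + s • v) - s * ⟪g x, v⟫ - β * s ^ 2 / 2 * ‖v‖ ^ 2 with hψ
  have hderiv : ∀ s : ℝ, HasDerivAt ψ
      (⟪g (x + s • v), v⟫ - ⟪g x, v⟫ - β * s * ‖v‖ ^ 2) s := by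
    intro s
    have h1 : HasDerivAt (fun s : ℝ => x + s • v) v s := by
      simpa using ((hasDerivAt_id s).smul_const v).const_add x
    have h2 : HasDerivAt (fun s : ℝ => f (x + s • v)) ⟪g (x + s • v), v⟫ s := by
      have := ((hgrad (x + s • v)).hasFDerivAt).comp_hasDerivAt s h1
      simp at this
      exact this
    have h3 : HasDerivAt (fun s : ℝ => s * ⟪g x, v⟫) ⟪g x, v⟫ s := by
      simpa using (hasDerivAt_id s).mul_const ⟪g x, v⟫
    have h4 : HasDerivAt (fun s : ℝ => β * s ^ 2 / 2 * ‖v‖ ^ 2) (β * s * ‖v‖ ^ 2) s := by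
      have : HasDerivAt (fun s : ℝ => s ^ 2) (2 * s) s := by
        simpa using hasDerivAt_pow 2 s
      have := ((this.const_mul β).div_const 2).mul_const (‖v‖ ^ 2)
      rw [show β * s * ‖v‖ ^ 2 = β * (2 * s) / 2 * ‖v‖ ^ 2 by ring]; exact this
    exact (h2.sub h3).sub h4
  have hpsile : ψ 1 ≤ ψ 0 := by
    have hmono : AntitoneOn ψ (Set.Icc 0 1) := by
      apply antitoneOn_of_deriv_nonpos (convex_Icc 0 1)
      · exact (fun s _ => (hderiv s).differentiableAt.continuousAt.continuousWithinAt)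
      · intro s hs
        exact (hderiv s).differentiableAt.differentiableWithinAt
      · intro s hs
        rw [interior_Icc] at hs
        rw [(hderiv s).deriv]
        have hb : ⟪g (x + s • v) - g x, v⟫ ≤ β * s * ‖v‖ ^ 2 := by
          calc ⟪g (x + s • v) - g x, v⟫ ≤ ‖g (x + s • v) - g x‖ * ‖v‖ :=
                real_inner_le_norm _ _
            _ ≤ (β * ‖s • v‖) * ‖v‖ := by
                have := hlip.dist_le_mul (x + s • v) x
                rw [Real.coe_toNNReal _ hβ] at this
                apply mul_le_mul_of_nonneg_right _ (norm_nonneg v)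
                simpa [dist_eq_norm] using this
            _ = β * (|s| * ‖v‖) * ‖v‖ := by rw [norm_smul]; simp [Real.norm_eq_abs]
            _ = β * s * ‖v‖ ^ 2 := by rw [abs_of_pos hs.1]; ring
        rw [inner_sub_left] at hb
        linarith
    have := hmono (Set.left_mem_Icc.2 zero_le_one) (Set.right_mem_Icc.2 zero_le_one) zero_le_one
    exact this
  simp only [hψ, one_smul, zero_smul, add_zero, one_pow, one_mul, zero_mul, zero_pow,
    mul_zero, sub_zero, ne_eq, OfNat.ofNat_ne_zero, not_false_eq_true] at hpsile
  linarith [hpsile]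

/-- PL contraction with geometric rate: for a `β`-smooth `f` with infimum `fstar`
satisfying the Polyak–Łojasiewicz inequality, gradient descent with step size
`0 < η ≤ 1/β` satisfies `f x_t - fstar ≤ (1 - ημ)^t (f x_0 - fstar)`. -/
theorem stmt_2 (p : ℕ) (f : EuclideanSpace ℝ (Fin p) → ℝ)
    (g : EuclideanSpace ℝ (Fin p) → EuclideanSpace ℝ (Fin p))
    (β η μ fstar : ℝ) (hβ : 0 < β) (hμ : 0 < μ)
    (hgrad : ∀ x, HasGradientAt f (g x) x)
    (hlip : LipschitzWith (Real.toNNReal β) g)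
    (hinf : ∀ y, fstar ≤ f y)
    (hPL : ∀ x, (1 / 2) * ‖g x‖ ^ 2 ≥ μ * (f x - fstar))
    (hη0 : 0 < η) (hη : η ≤ 1 / β)
    (x : ℕ → EuclideanSpace ℝ (Fin p))
    (hstep : ∀ t, x (t + 1) = x t - η • g (x t)) :
    ∀ t : ℕ, f (x t) - fstar ≤ (1 - η * μ) ^ t * (f (x 0) - fstar) := by
  have hβη : β * η ≤ 1 := by
    rw [← le_div_iff₀' hβ] at *; exact hη
  have key : ∀ t, f (x (t + 1)) - fstar ≤ (1 - η * μ) * (f (x t) - fstar) := by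
    intro t
    have hd := descent_lemma hgrad hlip hβ.le (x t) (-η • g (x t))
    have hx1 : x (t + 1) = x t + -η • g (x t) := by
      rw [hstep t]; module
    rw [← hx1] at hd
    have hip : ⟪g (x t), -η • g (x t)⟫ = -η * ‖g (x t)‖ ^ 2 := by
      rw [real_inner_smul_right, real_inner_self_eq_norm_sq]
    have hns : ‖-η • g (x t)‖ ^ 2 = η ^ 2 * ‖g (x t)‖ ^ 2 := by
      rw [norm_smul]; simp [abs_of_pos hη0, mul_pow]
    rw [hip, hns] at hd
    have h1 : f (x (t + 1)) ≤ f (x t) - (η / 2) * ‖g (x t)‖ ^ 2 := by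
      nlinarith [sq_nonneg ‖g (x t)‖, sq_nonneg η]
    have h2 := hPL (x t)
    nlinarith
  by_cases hc : η * μ ≤ 1
  · intro t
    induction t with
    | zero => simp
    | succ n ih =>
      calc f (x (n + 1)) - fstar ≤ (1 - η * μ) * (f (x n) - fstar) := key n
        _ ≤ (1 - η * μ) * ((1 - η * μ) ^ n * (f (x 0) - fstar)) := by
            apply mul_le_mul_of_nonneg_left ih (by linarith)
        _ = (1 - η * μ) ^ (n + 1) * (f (x 0) - fstar) := by ring
  · push_neg at hc
    have hall : ∀ t, f (x t) - fstar = 0 := by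
      intro t
      have h1 := key t
      have h2 := hinf (x (t + 1))
      have h3 := hinf (x t)
      nlinarith
    intro t
    rw [hall t, hall 0, mul_zero]
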